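/- The polytope K_n = {(t_1,...,t_{n-1}) ∈ ℝ^{n-1} : Σ_{k=1}^{n-1} t_k = 3^{n-1}, and Σ_{k∈I} t_k ≥ 3^{#I} for all proper subintervals I of [1,n-1]} has nonempty interior in the hyperplane {Σ t_k = 3^{n-1}}; in particular it is an (n-2)-dimensional convex polytope. -/

import Mathlib

open Finset

lemma aux1 (m j : ℕ) (hm : 1 ≤ m) : 3 * (m + j) ≤ m * 3 ^ (j + 1) := by
  have h : j < 3 ^ j := Nat.lt_pow_self (by norm_num)
  have : m * 3 ^ (j + 1) = 3 * (m * 3 ^ j) := by ring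
  nlinarith [Nat.one_le_iff_ne_zero.mp hm]

lemma aux2 (n m : ℕ) (h3 : 3 ≤ n) (hm1 : 1 ≤ m) (hm2 : m ≤ n - 2) :
    n * (n - 1) * 3 ^ m + (n - 1) ^ 2 ≤ n * (m * 3 ^ (n - 1)) := by
  obtain ⟨j, hj⟩ : ∃ j, n - 2 = m + j := ⟨n - 2 - m, by omega⟩
  have h1 : 3 * (m + j) ≤ m * 3 ^ (j + 1) := aux1 m j hm1
  have h2 : 3 ^ (n - 1) = 3 ^ (j + 1) * 3 ^ m := by rw [← pow_add]; congr 1; omega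
  have h3m : 3 ≤ 3 ^ m := by
    calc 3 = 3 ^ 1 := by norm_num
    _ ≤ 3 ^ m := Nat.pow_le_pow_right (by norm_num) hm1
  have hn2 : n - 1 = m + j + 1 := by omega
  have key : 3 * (n - 2) * 3 ^ m ≤ m * 3 ^ (n - 1) := by
    rw [h2, ← mul_assoc]
    exact Nat.mul_le_mul_right _ (by omega)
  -- goal: n*(n-1)*3^m + (n-1)^2 ≤ n*(m*3^(n-1))
  have : n * (3 * (n - 2) * 3 ^ m) ≤ n * (m * 3 ^ (n - 1)) := Nat.mul_le_mul_left _ key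
  refine le_trans ?_ this
  -- n*(n-1)*3^m + (n-1)^2 ≤ n*(3*(n-2)*3^m)
  zify [show 1 ≤ n by omega, show 2 ≤ n by omega]
  have h3' : (3:ℤ) ≤ 3 ^ m := by exact_mod_cast h3m
  have hn : (3:ℤ) ≤ (n:ℤ) := by exact_mod_cast h3
  nlinarith [mul_nonneg (by nlinarith : (0:ℤ) ≤ (3:ℤ)^m - 3) (by nlinarith : (0:ℤ) ≤ (n:ℤ)*(2*(n:ℤ)-5)), sq_nonneg ((n:ℤ)-3)]

lemma keyReal (n m : ℕ) (h3 : 3 ≤ n) (hm1 : 1 ≤ m) (hm2 : m ≤ n - 2) :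
    (3:ℝ) ^ m + ((n:ℝ) - 1) * (1 / n) ≤ (m : ℝ) * 3 ^ (n - 1) / ((n:ℝ) - 1) := by
  have h := aux2 n m h3 hm1 hm2
  have hA : ((n:ℝ) * ((n:ℝ) - 1) * 3 ^ m + ((n:ℝ) - 1) ^ 2) ≤ (n:ℝ) * ((m:ℝ) * 3 ^ (n - 1)) := by
    have := (Nat.cast_le (α := ℝ)).mpr h
    push_cast [Nat.cast_sub (show 1 ≤ n by omega)] at this
    convert this using 2
  have hn0 : (0:ℝ) < (n:ℝ) := by positivity
  have hn1 : (0:ℝ) < (n:ℝ) - 1 := by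
    have : (3:ℝ) ≤ (n:ℝ) := by exact_mod_cast h3
    linarith
  rw [le_div_iff₀ hn1]
  have h1n : (1:ℝ)/n * n = 1 := by field_simp
  nlinarith [hA, mul_pos hn1 hn1]


/-- The Shnider–Sternberg convex realization of the associahedron `K_n`, as a subset of
`ℝ^{n-1}`.  Coordinates are indexed by `Fin (n-1)` (representing the interval `[1, n-1]`);
a proper subinterval of `[1, n-1]` is `Finset.Icc i j` for `i ≤ j`, excluding the whole
interval; `c(I) = 3 ^ #I`. -/
def KnPoly (n : ℕ) : Set (Fin (n - 1) → ℝ) :=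
  {t | (∑ k, t k) = 3 ^ (n - 1) ∧
    ∀ i j : Fin (n - 1), i ≤ j → ¬((i : ℕ) = 0 ∧ (j : ℕ) = n - 2) →
      (3 : ℝ) ^ (Finset.Icc i j).card ≤ ∑ k ∈ Finset.Icc i j, t k}

/-- `K_n` has nonempty interior in the hyperplane `{∑ t_k = 3^{n-1}}`
(interior taken relative to the hyperplane); in particular it is an
`(n-2)`-dimensional convex polytope. -/
theorem KnPoly_nonempty_relative_interior (n : ℕ) (hn : 2 ≤ n) :
    (∃ t ∈ KnPoly n, ∃ ε > (0 : ℝ), ∀ s : Fin (n - 1) → ℝ,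
        (∑ k, s k) = 3 ^ (n - 1) → dist s t < ε → s ∈ KnPoly n) ∧
      Convex ℝ (KnPoly n) := by
  unfold KnPoly
  have hn1 : (0:ℝ) < (n:ℝ) - 1 := by
    have : (2:ℝ) ≤ (n:ℝ) := by exact_mod_cast hn
    linarith
  have hn0 : (0:ℝ) < (n:ℝ) := by positivity
  set t : Fin (n-1) → ℝ := fun _ => 3 ^ (n-1) / ((n:ℝ) - 1) with ht
  have hcard : ∀ i j : Fin (n-1), i ≤ j → ¬((i : ℕ) = 0 ∧ (j : ℕ) = n - 2) →
      1 ≤ (Finset.Icc i j).card ∧ (Finset.Icc i j).card ≤ n - 2 ∧ 3 ≤ n := by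
    intro i j hij h
    have h1 : (Finset.Icc i j).card = (j:ℕ) + 1 - (i:ℕ) := by
      rw [Fin.card_Icc]
    have hij' : (i:ℕ) ≤ (j:ℕ) := hij
    have := i.isLt; have := j.isLt
    omega
  have hsumt : ∀ (S : Finset (Fin (n-1))), ∑ k ∈ S, t k = (S.card : ℝ) * (3 ^ (n-1) / ((n:ℝ)-1)) := by
    intro S
    rw [Finset.sum_const, nsmul_eq_mul]
  have htmem : (∑ k, t k) = 3 ^ (n - 1) ∧
      ∀ i j : Fin (n - 1), i ≤ j → ¬((i : ℕ) = 0 ∧ (j : ℕ) = n - 2) →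
      (3 : ℝ) ^ (Finset.Icc i j).card ≤ ∑ k ∈ Finset.Icc i j, t k := by
    constructor
    · rw [hsumt, Finset.card_univ, Fintype.card_fin]
      rw [Nat.cast_sub (by omega), Nat.cast_one]
      field_simp
    · intro i j hij h
      obtain ⟨hm1, hm2, h3⟩ := hcard i j hij h
      rw [hsumt]
      have := keyReal n _ h3 hm1 hm2
      rw [mul_div_assoc] at this
      have hpos : (0:ℝ) < ((n:ℝ) - 1) * (1/n) := by positivity
      linarith
  refine ⟨⟨t, htmem, 1/n, by positivity, ?_⟩, ?_⟩
  · intro s hs hdist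
    refine ⟨hs, ?_⟩
    intro i j hij h
    obtain ⟨hm1, hm2, h3⟩ := hcard i j hij h
    have hdiff : ∑ k ∈ Finset.Icc i j, (t k - s k) ≤ ((Finset.Icc i j).card : ℝ) * (1/n) := by
      calc ∑ k ∈ Finset.Icc i j, (t k - s k) ≤ ∑ k ∈ Finset.Icc i j, dist s t := by
            refine Finset.sum_le_sum fun k _ => ?_
            calc t k - s k ≤ |t k - s k| := le_abs_self _
              _ = dist (s k) (t k) := by rw [Real.dist_eq, abs_sub_comm]
              _ ≤ dist s t := dist_le_pi_dist s t k
        _ = ((Finset.Icc i j).card : ℝ) * dist s t := by rw [Finset.sum_const, nsmul_eq_mul]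
        _ ≤ ((Finset.Icc i j).card : ℝ) * (1/n) := by
            refine mul_le_mul_of_nonneg_left hdist.le (by positivity)
    rw [Finset.sum_sub_distrib, hsumt] at hdiff
    have hkey := keyReal n _ h3 hm1 hm2
    rw [mul_div_assoc] at hkey
    have hcle : ((Finset.Icc i j).card : ℝ) ≤ (n:ℝ) - 1 := by
      have : (Finset.Icc i j).card ≤ n - 1 := by omega
      have := (Nat.cast_le (α := ℝ)).mpr this
      rw [Nat.cast_sub (by omega), Nat.cast_one] at this
      exact this
    have : ((Finset.Icc i j).card : ℝ) * (1/n) ≤ ((n:ℝ)-1) * (1/n) :=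
      mul_le_mul_of_nonneg_right hcle (by positivity)
    linarith
  · rintro x hx y hy a b ha hb hab
    refine ⟨?_, ?_⟩
    · simp only [Pi.add_apply, Pi.smul_apply, smul_eq_mul]
      rw [Finset.sum_add_distrib, ← Finset.mul_sum, ← Finset.mul_sum, hx.1, hy.1,
        ← add_mul, hab, one_mul]
    · intro i j hij h
      have h1 := hx.2 i j hij h
      have h2 := hy.2 i j hij h
      simp only [Pi.add_apply, Pi.smul_apply, smul_eq_mul]
      rw [Finset.sum_add_distrib, ← Finset.mul_sum, ← Finset.mul_sum]
      have hp : (0:ℝ) < 3 ^ (Finset.Icc i j).card := by positivity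
      nlinarith [mul_le_mul_of_nonneg_left h1 ha, mul_le_mul_of_nonneg_left h2 hb]
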